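/- Let (λ_n)_{n ≥ 1} be a sequence of pairwise distinct nonzero complex numbers converging to some λ* ∈ ℂ, and let (c_n)_{n ≥ 1} be complex numbers such that c_{2n+1} = 0 for every n and c_{2k} ≠ 0 for some k. Then there exist no T > 0 and no f ∈ L²(ℝ, ℂ) vanishing (almost everywhere) outside [0, T] such that ∫₀^T f(t)·exp(−λ_n·t) dt = c_n/λ_n for every n ≥ 1. -/

import Mathlib

open MeasureTheory Filter

/-- Insolvability of the moment problem: if `(λ_n)_{n ≥ 1}` are pairwise distinct
nonzero complex numbers converging to some `λ*`, and `(c_n)` vanishes along the odd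
indices but not along all even ones, then no compactly supported `L²` function `f` on
`[0, T]` satisfies `∫₀^T f(t) exp(-λ_n t) dt = c_n / λ_n` for all `n ≥ 1`. -/
theorem moment_problem_insolvable (l : ℕ → ℂ) (c : ℕ → ℂ) (lstar : ℂ)
    (hne : ∀ n : ℕ, 1 ≤ n → l n ≠ 0)
    (hinj : ∀ m : ℕ, 1 ≤ m → ∀ n : ℕ, 1 ≤ n → l m = l n → m = n)
    (hlim : Tendsto l atTop (nhds lstar))
    (hodd : ∀ n : ℕ, c (2 * n + 1) = 0)
    (heven : ∃ k : ℕ, 1 ≤ k ∧ c (2 * k) ≠ 0) :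
    ¬ ∃ (T : ℝ) (f : ℝ → ℂ), 0 < T ∧ MemLp f 2 volume ∧
        (∀ᵐ t : ℝ, t ∉ Set.Icc 0 T → f t = 0) ∧
        ∀ n : ℕ, 1 ≤ n →
          ∫ t in (0:ℝ)..T, f t * Complex.exp (-(l n * t)) = c n / l n := by
  rintro ⟨T, f, hT, hf2, -, hint⟩
  set μ := volume.restrict (Set.Ioc (0:ℝ) T) with hμdef
  have hμfin : IsFiniteMeasure μ := by
    constructor
    rw [hμdef, Measure.restrict_apply_univ]
    exact measure_Ioc_lt_top
  have hfm : AEStronglyMeasurable f μ := hf2.aestronglyMeasurable.restrict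
  have hfi : Integrable f μ :=
    memLp_one_iff_integrable.mp
      ((hf2.restrict _).mono_exponent (by norm_num))
  -- the Laplace transform as an entire function
  set F : ℂ → ℂ := fun z => ∫ t, f t * Complex.exp (-(z * t)) ∂μ with hFdef
  have hFval : ∀ n : ℕ, 1 ≤ n → F (l n) = c n / l n := by
    intro n hn
    have h := hint n hn
    rwa [intervalIntegral.integral_of_le hT.le] at h
  -- measurability of the integrand for every parameter
  have hmeas : ∀ z : ℂ, AEStronglyMeasurable (fun t : ℝ => f t * Complex.exp (-(z * t))) μ := by
    intro z
    exact hfm.mul ((Complex.continuous_exp.comp (by fun_prop)).aestronglyMeasurable)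
  have hmeas' : ∀ z : ℂ, AEStronglyMeasurable
      (fun t : ℝ => f t * (-(t : ℂ) * Complex.exp (-(z * t)))) μ := by
    intro z
    exact hfm.mul ((Continuous.mul (by fun_prop)
      (Complex.continuous_exp.comp (by fun_prop))).aestronglyMeasurable)
  have hmem : ∀ᵐ t ∂μ, t ∈ Set.Ioc (0:ℝ) T :=
    ae_restrict_mem measurableSet_Ioc
  -- norm estimate for the exponential
  have hexp : ∀ z : ℂ, ∀ x ∈ Metric.ball z 1, ∀ t ∈ Set.Ioc (0:ℝ) T,
      ‖Complex.exp (-(x * t))‖ ≤ Real.exp ((‖z‖ + 1) * T) := by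
    intro z x hx t ht
    rw [Complex.norm_exp]
    apply Real.exp_le_exp.mpr
    have h1 : (-(x * (t:ℂ))).re = -(x.re * t) := by simp
    rw [h1]
    have hxz : ‖x‖ ≤ ‖z‖ + 1 := by
      have := mem_ball_iff_norm.mp hx
      have h2 : ‖x‖ - ‖z‖ ≤ ‖x - z‖ := norm_sub_norm_le x z
      linarith [this.le]
    have hre : |x.re| ≤ ‖z‖ + 1 := le_trans (Complex.abs_re_le_norm x) hxz
    calc -(x.re * t) ≤ |x.re * t| := neg_le_abs _
      _ = |x.re| * |t| := abs_mul _ _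
      _ ≤ (‖z‖ + 1) * T := by
          apply mul_le_mul hre ?_ (abs_nonneg t) (by positivity)
          rw [abs_of_pos ht.1]; exact ht.2
  -- F is entire
  have hdiff : Differentiable ℂ F := by
    intro z
    have key := hasDerivAt_integral_of_dominated_loc_of_deriv_le
      (F := fun x t => f t * Complex.exp (-(x * t)))
      (F' := fun x t => f t * (-(t : ℂ) * Complex.exp (-(x * t))))
      (x₀ := z) (bound := fun t => ‖f t‖ * (T * Real.exp ((‖z‖ + 1) * T)))
      (μ := μ) (Metric.ball_mem_nhds z one_pos)
      (Eventually.of_forall fun x => hmeas x)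
      ?_ (hmeas' z) ?_ ((hfi.norm.mul_const _)) ?_
    · exact key.2.differentiableAt
    · -- integrability at z
      apply Integrable.mono' ((hfi.norm.mul_const (Real.exp ((‖z‖ + 1) * T)))) (hmeas z)
      filter_upwards [hmem] with t ht
      rw [norm_mul]
      exact mul_le_mul_of_nonneg_left
        (hexp z z (Metric.mem_ball_self one_pos) t ht) (norm_nonneg _)
    · -- bound
      filter_upwards [hmem] with t ht x hx
      rw [norm_mul, norm_mul]
      apply mul_le_mul_of_nonneg_left ?_ (norm_nonneg _)
      apply mul_le_mul ?_ (hexp z x hx t ht) (norm_nonneg _) hT.le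
      rw [norm_neg, Complex.norm_real, Real.norm_eq_abs, abs_of_pos ht.1]
      exact ht.2
    · -- differentiability of the integrand in the parameter
      filter_upwards with t x _
      have h1 : HasDerivAt (fun x : ℂ => -(x * t)) (-(t:ℂ)) x := by
        have h := ((hasDerivAt_id x).mul_const (t:ℂ)).neg; rw [one_mul] at h; exact h
      have h2 : HasDerivAt (fun x : ℂ => Complex.exp (-(x * t)))
          (-(t:ℂ) * Complex.exp (-(x * t))) x := by
        have h := (Complex.hasDerivAt_exp (-(x * t))).comp x h1; rw [mul_comm (Complex.exp (-(x * t)))] at h; exact h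
      simpa using h2.const_mul (f t)
  have hanal : AnalyticOnNhd ℂ F Set.univ := fun x _ => hdiff.analyticAt x
  -- zeros accumulate at lstar
  have hodd_tendsto : Tendsto (fun n : ℕ => 2 * n + 1) atTop atTop := by
    apply tendsto_atTop_mono (f := fun n : ℕ => n)
    · intro n; omega
    · exact tendsto_id
  have htend : Tendsto (fun n : ℕ => l (2 * n + 1)) atTop (nhds lstar) :=
    hlim.comp hodd_tendsto
  have hev : ∀ᶠ n : ℕ in atTop, l (2 * n + 1) ≠ lstar := by
    by_cases h : ∃ n₀ : ℕ, l (2 * n₀ + 1) = lstar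
    · obtain ⟨n₀, hn₀⟩ := h
      filter_upwards [eventually_gt_atTop n₀] with n hn
      intro hc
      have := hinj _ (by omega) _ (by omega) (hc.trans hn₀.symm)
      omega
    · push_neg at h
      exact Eventually.of_forall h
  have htend' : Tendsto (fun n : ℕ => l (2 * n + 1)) atTop (nhdsWithin lstar {lstar}ᶜ) := by
    rw [tendsto_nhdsWithin_iff]
    exact ⟨htend, hev⟩
  have hfreq : ∃ᶠ z in nhdsWithin lstar {lstar}ᶜ, F z = 0 := by
    apply htend'.frequently
    apply Frequently.of_forall
    intro n
    rw [hFval (2 * n + 1) (by omega), hodd n, zero_div]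
  have hzero : Set.EqOn F 0 Set.univ :=
    hanal.eqOn_zero_of_preconnected_of_frequently_eq_zero isPreconnected_univ
      (Set.mem_univ lstar) hfreq
  obtain ⟨k, hk, hck⟩ := heven
  have h1 : F (l (2 * k)) = 0 := hzero (Set.mem_univ _)
  rw [hFval (2 * k) (by omega)] at h1
  exact div_ne_zero hck (hne _ (by omega)) h1
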